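/- Let M be a metric space, E ⊆ ℝⁿ × ℝᵐ a set measurable with respect to the product of Hausdorff measures ℋⁿ_M × ℋᵐ on M × ℝᵐ after applying h, and h : E → M × ℝᵐ of the form h(x,y) = (f(x,y), y) which is κ-bi-Lipschitz on E with ℋⁿ(f(E)) ≤ 1. Write E_y = E ∩ (ℝⁿ × {y}). Then ∫∫ ℋⁿ(f(E_y) ∩ f(E_z)) dℋᵐ(y) dℋᵐ(z) ≥ (ℋⁿ×ℋᵐ(h(E)))² / ℋⁿ(f(E)). In particular there exists y′ ∈ ℝᵐ with ∫ ℋⁿ(f(E_{y′}) ∩ f(E_z)) dℋᵐ(z) ≥ (ℋⁿ×ℋᵐ(h(E)))² / ℋⁿ(f(E)). -/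

import Mathlib

open Set MeasureTheory
open scoped ENNReal

private lemma exists_ge_of_setLIntegral_ge {α : Type*} [MeasurableSpace α] {μ : Measure α}
    {s : Set α} {F : α → ℝ≥0∞} {C : ℝ≥0∞} (hs : MeasurableSet s) (hs1 : μ s = 1)
    (hC : C ≠ ∞) (hF : Measurable F) (h : C ≤ ∫⁻ x in s, F x ∂μ) :
    ∃ y ∈ s, C ≤ F y := by
  by_contra hcon
  push_neg at hcon
  -- there is a rational level below `C` under which `F` stays on a positive measure subset of `s`
  have hpos : ∃ q : ℚ, ((Real.toNNReal q : ℝ≥0∞) < C) ∧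
      μ (s ∩ {y | F y ≤ (Real.toNNReal q : ℝ≥0∞)}) ≠ 0 := by
    by_contra hall
    push_neg at hall
    have hcover : s ⊆ ⋃ q : ℚ,
        (if ((Real.toNNReal q : ℝ≥0∞) < C) then s ∩ {y | F y ≤ (Real.toNNReal q : ℝ≥0∞)}
          else (∅ : Set α)) := by
      intro y hy
      obtain ⟨q, _, h1, h2⟩ := ENNReal.lt_iff_exists_rat_btwn.1 (hcon y hy)
      refine mem_iUnion.2 ⟨q, ?_⟩
      rw [if_pos h2]
      exact ⟨hy, h1.le⟩
    have h0 : μ (⋃ q : ℚ,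
        (if ((Real.toNNReal q : ℝ≥0∞) < C) then s ∩ {y | F y ≤ (Real.toNNReal q : ℝ≥0∞)}
          else (∅ : Set α))) = 0 := by
      refine measure_iUnion_null fun q => ?_
      by_cases hq : ((Real.toNNReal q : ℝ≥0∞) < C)
      · rw [if_pos hq]; exact hall q hq
      · rw [if_neg hq]; exact measure_empty
    have := (measure_mono hcover).trans_eq h0
    rw [hs1] at this
    exact one_ne_zero (le_antisymm this zero_le)
  obtain ⟨q, hqC, hqpos⟩ := hpos
  set c : ℝ≥0∞ := (Real.toNNReal q : ℝ≥0∞) with hc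
  set B : Set α := {y | F y ≤ c} with hB
  have hBm : MeasurableSet B := measurableSet_le hF measurable_const
  have hA1 : μ (s ∩ B) ≤ 1 := hs1 ▸ measure_mono inter_subset_left
  have hA1' : μ (s ∩ B) ≠ ∞ := (hA1.trans_lt ENNReal.one_lt_top).ne
  have hd1 : μ (s \ B) ≤ 1 := hs1 ▸ measure_mono diff_subset
  have hsplit : ∫⁻ x in s, F x ∂μ = (∫⁻ x in s ∩ B, F x ∂μ) + ∫⁻ x in s \ B, F x ∂μ := by
    rw [← lintegral_union (hs.diff hBm)
      (disjoint_left.2 fun y hyA hyD => hyD.2 hyA.2), Set.inter_union_diff]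
  have h1 : ∫⁻ x in s ∩ B, F x ∂μ ≤ c * μ (s ∩ B) := by
    calc ∫⁻ x in s ∩ B, F x ∂μ ≤ ∫⁻ _ in s ∩ B, c ∂μ :=
          setLIntegral_mono measurable_const fun y hy => hy.2
    _ = c * μ (s ∩ B) := setLIntegral_const _ _
  have h2 : ∫⁻ x in s \ B, F x ∂μ ≤ C * μ (s \ B) := by
    calc ∫⁻ x in s \ B, F x ∂μ ≤ ∫⁻ _ in s \ B, C ∂μ :=
          setLIntegral_mono measurable_const fun y hy => (hcon y hy.1).le
    _ = C * μ (s \ B) := setLIntegral_const _ _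
  have hstrict : c * μ (s ∩ B) < C * μ (s ∩ B) :=
    ENNReal.mul_lt_mul_left hqpos hA1' hqC
  have hzne : C * μ (s \ B) ≠ ∞ :=
    ENNReal.mul_ne_top hC (hd1.trans_lt ENNReal.one_lt_top).ne
  have : ∫⁻ x in s, F x ∂μ < C := by
    calc ∫⁻ x in s, F x ∂μ ≤ c * μ (s ∩ B) + C * μ (s \ B) := by
          rw [hsplit]; exact add_le_add h1 h2
    _ < C * μ (s ∩ B) + C * μ (s \ B) := ENNReal.add_lt_add_right hzne hstrict
    _ = C * (μ (s ∩ B) + μ (s \ B)) := (mul_add _ _ _).symm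
    _ = C * μ s := by rw [measure_inter_add_diff s hBm]
    _ = C := by rw [hs1, mul_one]
  exact absurd h (not_le.2 this)

/-- Fubini/Cauchy–Schwarz estimate for slices (Lemma 6.6): if
`h(x,y) = (f(x,y), y)` is `κ`-bi-Lipschitz on `E ⊆ ℝⁿ × [0,1]ᵐ`, `h(E)` is
measurable in `M × ℝᵐ` and `ℋⁿ(f(E)) ≤ 1`, then
`∫∫ ℋⁿ(f(E_y) ∩ f(E_z)) dy dz ≥ (ℋⁿ×ℋᵐ(h(E)))² / ℋⁿ(f(E))`, and in particular
some `y′` realizes the same lower bound for the inner integral. -/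
theorem slice_overlap_integral_lower_bound
    {n m : ℕ} {M : Type*} [MetricSpace M] [MeasurableSpace M] [BorelSpace M]
    (f : (Fin n → ℝ) × (Fin m → ℝ) → M)
    (E : Set ((Fin n → ℝ) × (Fin m → ℝ))) (κ : ℝ) (hκ : 0 < κ)
    (hbil : ∀ p ∈ E, ∀ q ∈ E,
      κ * dist p q ≤ dist (f p, p.2) (f q, q.2) ∧ dist (f p, p.2) (f q, q.2) ≤ dist p q)
    (hmeas : MeasurableSet ((fun p => (f p, p.2)) '' E))
    (hE2 : ∀ p ∈ E, p.2 ∈ Icc (0 : Fin m → ℝ) 1)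
    (hfE : μH[n] (f '' E) ≤ 1) :
    (∫⁻ y in Icc (0 : Fin m → ℝ) 1, ∫⁻ z,
        μH[n] ((f '' {p | p ∈ E ∧ p.2 = y}) ∩ (f '' {p | p ∈ E ∧ p.2 = z}))
          ∂(volume : Measure (Fin m → ℝ)) ∂(volume : Measure (Fin m → ℝ)))
      ≥ (((μH[n] : Measure M).prod (volume : Measure (Fin m → ℝ)))
            ((fun p => (f p, p.2)) '' E)) ^ 2 / μH[n] (f '' E) ∧
    ∃ y' ∈ Icc (0 : Fin m → ℝ) 1,
      (∫⁻ z, μH[n] ((f '' {p | p ∈ E ∧ p.2 = y'}) ∩ (f '' {p | p ∈ E ∧ p.2 = z}))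
          ∂(volume : Measure (Fin m → ℝ)))
        ≥ (((μH[n] : Measure M).prod (volume : Measure (Fin m → ℝ)))
            ((fun p => (f p, p.2)) '' E)) ^ 2 / μH[n] (f '' E) := by
  classical
  set ν : Measure M := μH[n] with hν
  set H : Set (M × (Fin m → ℝ)) := (fun p => (f p, p.2)) '' E with hHdef
  have hmem : ∀ {x : M} {y : Fin m → ℝ}, (x, y) ∈ H ↔ ∃ p ∈ E, f p = x ∧ p.2 = y := by
    intro x y
    constructor
    · rintro ⟨p, hp, hpe⟩
      exact ⟨p, hp, (Prod.ext_iff.1 hpe).1, (Prod.ext_iff.1 hpe).2⟩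
    · rintro ⟨p, hp, h1, h2⟩
      exact ⟨p, hp, by simp only []; rw [h1, h2]⟩
  have hslice : ∀ y : Fin m → ℝ, f '' {p | p ∈ E ∧ p.2 = y} = {x | (x, y) ∈ H} := by
    intro y; ext x
    simp only [mem_image, mem_setOf_eq, hmem]
    constructor
    · rintro ⟨p, ⟨hp, hpy⟩, rfl⟩; exact ⟨p, hp, rfl, hpy⟩
    · rintro ⟨p, hp, h1, h2⟩; exact ⟨p, ⟨hp, h2⟩, h1⟩
  have hfst : ∀ {x y}, (x, y) ∈ H → x ∈ f '' E := by
    intro x y hxy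
    obtain ⟨p, hp, h1, _⟩ := hmem.1 hxy
    exact ⟨p, hp, h1⟩
  have hsnd : ∀ {x y}, (x, y) ∈ H → y ∈ Icc (0 : Fin m → ℝ) 1 := by
    intro x y hxy
    obtain ⟨p, hp, _, h2⟩ := hmem.1 hxy
    exact h2 ▸ hE2 p hp
  obtain ⟨U, hUsub, hUm, hUeq⟩ := exists_measurable_superset ν (f '' E)
  set ν' : Measure M := ν.restrict U with hν'def
  have hν'univ : ν' univ = ν (f '' E) := by
    rw [hν'def, Measure.restrict_apply_univ, hUeq]
  have hD1 : ν' univ ≤ 1 := hν'univ ▸ hfE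
  haveI : IsFiniteMeasure ν' := ⟨lt_of_le_of_lt hD1 ENNReal.one_lt_top⟩
  have hrestr : ∀ S : Set M, S ⊆ U → ν' S = ν S := by
    intro S hSU
    rw [hν'def, Measure.restrict_apply' hUm, Set.inter_eq_self_of_subset_left hSU]
  -- the slice-measure function
  set g : M → ℝ≥0∞ := fun x => volume (Prod.mk x ⁻¹' H) with hgdef
  have hgmeas : Measurable g := measurable_measure_prodMk_left hmeas
  have hIcc1 : volume (Icc (0 : Fin m → ℝ) 1) = 1 := by
    rw [Real.volume_Icc_pi]; simp
  have hsubIcc : ∀ x, Prod.mk x ⁻¹' H ⊆ Icc (0 : Fin m → ℝ) 1 := fun x y hy => hsnd hy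
  have hgle : ∀ x, g x ≤ 1 := fun x => hIcc1 ▸ measure_mono (hsubIcc x)
  have hg0 : ∀ x ∉ U, g x = 0 := by
    intro x hx
    have he : Prod.mk x ⁻¹' H = ∅ := by
      ext y
      simp only [mem_preimage, mem_empty_iff_false, iff_false]
      exact fun hy => hx (hUsub (hfst hy))
    rw [hgdef]; simp only [he, measure_empty]
  set N : ℝ≥0∞ := (ν.prod volume) H with hNdef
  have hN : N = ∫⁻ x, g x ∂ν := Measure.prod_apply hmeas
  have hN' : N = ∫⁻ x, g x ∂ν' := by
    have h0 : ∫⁻ x in Uᶜ, g x ∂ν = 0 := by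
      have hle : ∫⁻ x in Uᶜ, g x ∂ν ≤ ∫⁻ _ in Uᶜ, (0 : ℝ≥0∞) ∂ν :=
        setLIntegral_mono measurable_const fun x hx => (hg0 x hx).le
      simpa using hle
    rw [hN, ← lintegral_add_compl g hUm, h0, add_zero]
  -- indicator of H
  set I : M × (Fin m → ℝ) → ℝ≥0∞ := H.indicator 1 with hIdef
  have hImeas : Measurable I := measurable_const.indicator hmeas
  have hIz : ∀ x, (fun z => I (x, z)) = (Prod.mk x ⁻¹' H).indicator (1 : (Fin m → ℝ) → ℝ≥0∞) := by
    intro x; funext z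
    simp only [hIdef, Set.indicator_apply, mem_preimage, Pi.one_apply]
  have hzint : ∀ x, ∫⁻ z, I (x, z) ∂(volume : Measure (Fin m → ℝ)) = g x := by
    intro x
    rw [hIz x]
    exact lintegral_indicator_one (hmeas.preimage measurable_prodMk_left)
  have hyint : ∀ x, ∫⁻ y in Icc (0 : Fin m → ℝ) 1, I (x, y)
      ∂(volume : Measure (Fin m → ℝ)) = g x := by
    intro x
    rw [hIz x]
    have h1 := lintegral_indicator_one
      (μ := (volume : Measure (Fin m → ℝ)).restrict (Icc (0 : Fin m → ℝ) 1))
      (hmeas.preimage (measurable_prodMk_left (x := x)))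
    rw [Measure.restrict_apply (hmeas.preimage measurable_prodMk_left),
      Set.inter_eq_self_of_subset_left (hsubIcc x)] at h1
    exact h1
  -- the double-slice sets
  set S : (Fin m → ℝ) → (Fin m → ℝ) → Set M :=
    fun y z => {x | (x, y) ∈ H ∧ (x, z) ∈ H} with hSdef
  have hSmeas : ∀ y z, MeasurableSet (S y z) := by
    intro y z
    have : S y z = ((fun x => (x, y)) ⁻¹' H) ∩ ((fun x => (x, z)) ⁻¹' H) := rfl
    rw [this]
    exact (hmeas.preimage measurable_prodMk_right).inter
      (hmeas.preimage measurable_prodMk_right)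
  have hSsub : ∀ y z, S y z ⊆ U := fun y z x hx => hUsub (hfst hx.1)
  have hint : ∀ y z, ν' (S y z) = ∫⁻ x, I (x, y) * I (x, z) ∂ν' := by
    intro y z
    have hind : (fun x => I (x, y) * I (x, z)) = (S y z).indicator (1 : M → ℝ≥0∞) := by
      funext x
      simp only [hIdef, Set.indicator_apply, hSdef, mem_setOf_eq, Pi.one_apply]
      by_cases h1 : (x, y) ∈ H <;> by_cases h2 : (x, z) ∈ H <;> simp [h1, h2]
    rw [hind]
    exact (lintegral_indicator_one (hSmeas y z)).symm
  have hinteq : ∀ y z, μH[n] ((f '' {p | p ∈ E ∧ p.2 = y}) ∩ (f '' {p | p ∈ E ∧ p.2 = z}))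
      = ν' (S y z) := by
    intro y z
    rw [← hν, hslice y, hslice z]
    have hset : {x | (x, y) ∈ H} ∩ {x | (x, z) ∈ H} = S y z := rfl
    rw [hset, ← hrestr _ (hSsub y z)]
  -- main identity : LHS = ∫ g²
  have hmain : (∫⁻ y in Icc (0 : Fin m → ℝ) 1, ∫⁻ z, ν' (S y z)
        ∂(volume : Measure (Fin m → ℝ)) ∂(volume : Measure (Fin m → ℝ)))
      = ∫⁻ x, g x * g x ∂ν' := by
    have step1 : ∀ y, (∫⁻ z, ν' (S y z) ∂(volume : Measure (Fin m → ℝ)))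
        = ∫⁻ x, I (x, y) * g x ∂ν' := by
      intro y
      have hswap : (∫⁻ z, ∫⁻ x, I (x, y) * I (x, z) ∂ν' ∂(volume : Measure (Fin m → ℝ)))
          = ∫⁻ x, ∫⁻ z, I (x, y) * I (x, z) ∂(volume : Measure (Fin m → ℝ)) ∂ν' := by
        refine lintegral_lintegral_swap ?_
        exact ((hImeas.comp ((measurable_snd.prodMk measurable_const)))).mul
          ((hImeas.comp ((measurable_snd.prodMk measurable_fst)))) |>.aemeasurable
      calc (∫⁻ z, ν' (S y z) ∂(volume : Measure (Fin m → ℝ)))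
          = ∫⁻ z, ∫⁻ x, I (x, y) * I (x, z) ∂ν' ∂(volume : Measure (Fin m → ℝ)) := by
            exact lintegral_congr fun z => hint y z
      _ = ∫⁻ x, ∫⁻ z, I (x, y) * I (x, z) ∂(volume : Measure (Fin m → ℝ)) ∂ν' := hswap
      _ = ∫⁻ x, I (x, y) * g x ∂ν' := by
            refine lintegral_congr fun x => ?_
            rw [lintegral_const_mul (I (x, y))
              (show Measurable fun z => I (x, z) from hImeas.comp measurable_prodMk_left),
              hzint x]
    have hswap2 : (∫⁻ y in Icc (0 : Fin m → ℝ) 1, ∫⁻ x, I (x, y) * g x ∂ν'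
          ∂(volume : Measure (Fin m → ℝ)))
        = ∫⁻ x, ∫⁻ y in Icc (0 : Fin m → ℝ) 1, I (x, y) * g x
            ∂(volume : Measure (Fin m → ℝ)) ∂ν' := by
      refine lintegral_lintegral_swap ?_
      exact ((hImeas.comp ((measurable_snd.prodMk measurable_fst)))).mul
        (hgmeas.comp measurable_snd) |>.aemeasurable
    calc (∫⁻ y in Icc (0 : Fin m → ℝ) 1, ∫⁻ z, ν' (S y z)
          ∂(volume : Measure (Fin m → ℝ)) ∂(volume : Measure (Fin m → ℝ)))
        = ∫⁻ y in Icc (0 : Fin m → ℝ) 1, ∫⁻ x, I (x, y) * g x ∂ν'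
            ∂(volume : Measure (Fin m → ℝ)) := lintegral_congr fun y => step1 y
    _ = ∫⁻ x, ∫⁻ y in Icc (0 : Fin m → ℝ) 1, I (x, y) * g x
          ∂(volume : Measure (Fin m → ℝ)) ∂ν' := hswap2
    _ = ∫⁻ x, g x * g x ∂ν' := by
          refine lintegral_congr fun x => ?_
          rw [lintegral_mul_const (g x)
            (show Measurable fun y => I (x, y) from hImeas.comp measurable_prodMk_left),
            hyint x]
  -- Cauchy–Schwarz
  have hCS : N * N ≤ (∫⁻ x, g x * g x ∂ν') * ν' univ := by
    have h22 : (2 : ℝ).HolderConjugate 2 := Real.HolderConjugate.two_two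
    have hHolder := ENNReal.lintegral_mul_le_Lp_mul_Lq ν' h22 hgmeas.aemeasurable
      (aemeasurable_const (b := (1 : ℝ≥0∞)))
    simp only [Pi.mul_apply, mul_one, ENNReal.one_rpow, lintegral_one] at hHolder
    have hA : (∫⁻ a, g a ^ (2 : ℝ) ∂ν') = ∫⁻ x, g x * g x ∂ν' := by
      refine lintegral_congr fun x => ?_
      rw [show (2 : ℝ) = ((2 : ℕ) : ℝ) by norm_num, ENNReal.rpow_natCast, sq]
    rw [hA, ← hN'] at hHolder
    calc N * N ≤ ((∫⁻ x, g x * g x ∂ν') ^ (1 / (2:ℝ)) * ν' univ ^ (1 / (2:ℝ))) *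
          ((∫⁻ x, g x * g x ∂ν') ^ (1 / (2:ℝ)) * ν' univ ^ (1 / (2:ℝ))) :=
        mul_le_mul' hHolder hHolder
    _ = (∫⁻ x, g x * g x ∂ν') * ν' univ := by
        rw [mul_mul_mul_comm, ← ENNReal.rpow_add_of_nonneg _ _ (by norm_num) (by norm_num),
          ← ENNReal.rpow_add_of_nonneg _ _ (by norm_num) (by norm_num)]
        norm_num
  have hpart1 : N ^ 2 / ν (f '' E) ≤ ∫⁻ x, g x * g x ∂ν' := by
    refine ENNReal.div_le_of_le_mul ?_
    rw [sq, ← hν'univ]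
    exact hCS
  set C : ℝ≥0∞ := N ^ 2 / ν (f '' E) with hCdef
  have hCne : C ≠ ∞ := by
    by_cases hD : ν (f '' E) = 0
    · have hz : ν' = 0 := Measure.measure_univ_eq_zero.mp (hν'univ.trans hD)
      have hN0 : N = 0 := by rw [hN', hz, lintegral_zero_measure]
      rw [hCdef, hN0]
      simp
    · have hNle : N ≤ 1 := by
        rw [hN']
        calc ∫⁻ x, g x ∂ν' ≤ ∫⁻ _, (1 : ℝ≥0∞) ∂ν' := lintegral_mono fun x => hgle x
        _ = ν' univ := lintegral_one
        _ ≤ 1 := hD1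
      have : N ^ 2 ≠ ∞ := (pow_le_one' hNle 2).trans_lt ENNReal.one_lt_top |>.ne
      exact (ENNReal.div_lt_top this hD).ne
  have hLHSeq : (∫⁻ y in Icc (0 : Fin m → ℝ) 1, ∫⁻ z,
        μH[n] ((f '' {p | p ∈ E ∧ p.2 = y}) ∩ (f '' {p | p ∈ E ∧ p.2 = z}))
          ∂(volume : Measure (Fin m → ℝ)) ∂(volume : Measure (Fin m → ℝ)))
      = ∫⁻ y in Icc (0 : Fin m → ℝ) 1, ∫⁻ z, ν' (S y z)
          ∂(volume : Measure (Fin m → ℝ)) ∂(volume : Measure (Fin m → ℝ)) := by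
    refine lintegral_congr fun y => lintegral_congr fun z => hinteq y z
  have hmainineq : C ≤ ∫⁻ y in Icc (0 : Fin m → ℝ) 1, ∫⁻ z,
        μH[n] ((f '' {p | p ∈ E ∧ p.2 = y}) ∩ (f '' {p | p ∈ E ∧ p.2 = z}))
          ∂(volume : Measure (Fin m → ℝ)) ∂(volume : Measure (Fin m → ℝ)) := by
    rw [hLHSeq, hmain]
    exact hpart1
  constructor
  · exact hmainineq
  · -- measurability of the inner integral as a function of y
    set K : Set (((Fin m → ℝ) × (Fin m → ℝ)) × M) :=
      {q | (q.2, q.1.1) ∈ H ∧ (q.2, q.1.2) ∈ H} with hKdef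
    have hKmeas : MeasurableSet K := by
      have : K = ((fun q : ((Fin m → ℝ) × (Fin m → ℝ)) × M => (q.2, q.1.1)) ⁻¹' H) ∩
          ((fun q : ((Fin m → ℝ) × (Fin m → ℝ)) × M => (q.2, q.1.2)) ⁻¹' H) := rfl
      rw [this]
      exact (hmeas.preimage (measurable_snd.prodMk (measurable_fst.comp measurable_fst))).inter
        (hmeas.preimage (measurable_snd.prodMk (measurable_snd.comp measurable_fst)))
    have hGm : Measurable fun y => ∫⁻ z, ν' (S y z) ∂(volume : Measure (Fin m → ℝ)) := by
      refine Measurable.lintegral_prod_right (f := fun y z => ν' (S y z)) ?_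
      have huncurry : (Function.uncurry fun y z => ν' (S y z))
          = fun yz : (Fin m → ℝ) × (Fin m → ℝ) => ν' (Prod.mk yz ⁻¹' K) := rfl
      rw [huncurry]
      exact measurable_measure_prodMk_left hKmeas
    obtain ⟨y', hy'mem, hy'⟩ := exists_ge_of_setLIntegral_ge measurableSet_Icc hIcc1 hCne hGm
      (hLHSeq ▸ hmainineq)
    refine ⟨y', hy'mem, ?_⟩
    have : (∫⁻ z, μH[n] ((f '' {p | p ∈ E ∧ p.2 = y'}) ∩ (f '' {p | p ∈ E ∧ p.2 = z}))
        ∂(volume : Measure (Fin m → ℝ)))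
        = ∫⁻ z, ν' (S y' z) ∂(volume : Measure (Fin m → ℝ)) :=
      lintegral_congr fun z => hinteq y' z
    rw [ge_iff_le, this]
    exact hy'
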